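/- Let (Z,d,ν) be a doubling metric measure space with relative lower volume decay of order Q > 0, i.e., ν(B(z,r'))/ν(B(z,r)) ≥ C^{-1}(r'/r)^Q for all z and 0 < r' ≤ r. Let β > 0 and suppose the uniformized measure μ_β on X̄_ρ satisfies: μ_β(B_ρ(x,r)) ≍ r^β ν(B_Z(z,r)) when r ≥ d_ρ(x) (z a nearest boundary point), and μ_β(B_ρ(x,r)) ≍ r·d_ρ(x)^{β-1} ν(B(v)) when r ≤ d_ρ(x) (v a nearest vertex). Then μ_β has relative lower volume decay of order Q_β = max{1, Q+β} on X̄_ρ. -/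

import Mathlib

open MeasureTheory
open scoped ENNReal

/-- Transfer of relative lower volume decay to the uniformized filling: if `ν` (appearing
through `F x r = ν(B_Z(z,r))`, `z` a nearest boundary point to `x`) has relative lower
volume decay of order `Q`, and the uniformized measure `μ_β` on `X̄_ρ` satisfies
`μ_β(B_ρ(x,r)) ≍ r^β F x r` when `r ≥ d_ρ(x)` and
`μ_β(B_ρ(x,r)) ≍ r · d_ρ(x)^{β-1} G x` (`G x = ν(B(v))`, `v` a nearest vertex) when
`r ≤ d_ρ(x)`, then `μ_β` has relative lower volume decay of order
`Q_β = max{1, Q + β}`. -/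
theorem stmt13 {W : Type*} [MetricSpace W] [MeasurableSpace W]
    (μ : Measure W) (β Q : ℝ) (hβ : 0 < β) (hQ : 0 < Q)
    (C Clow : ℝ) (hC : 1 ≤ C) (hClow : 1 ≤ Clow)
    (dB : W → ℝ) (hdB : ∀ x, 0 ≤ dB x)
    (F : W → ℝ → ℝ≥0∞) (G : W → ℝ≥0∞)
    (hF : ∀ (x : W) (r' r : ℝ), 0 < r' → r' ≤ r →
      F x r ≤ ENNReal.ofReal (Clow * (r / r') ^ Q) * F x r')
    (hbig : ∀ (x : W) (r : ℝ), 0 < r → dB x ≤ r →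
      ENNReal.ofReal (r ^ β) * F x r ≤ ENNReal.ofReal C * μ (Metric.ball x r) ∧
        μ (Metric.ball x r) ≤ ENNReal.ofReal C * (ENNReal.ofReal (r ^ β) * F x r))
    (hsmall : ∀ (x : W) (r : ℝ), 0 < r → r ≤ dB x →
      ENNReal.ofReal (r * dB x ^ (β - 1)) * G x ≤
          ENNReal.ofReal C * μ (Metric.ball x r) ∧
        μ (Metric.ball x r) ≤
          ENNReal.ofReal C * (ENNReal.ofReal (r * dB x ^ (β - 1)) * G x)) :
    ∃ C' : ℝ, 1 ≤ C' ∧ ∀ (x : W) (r' r : ℝ), 0 < r' → r' ≤ r →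
      μ (Metric.ball x r) ≤
        ENNReal.ofReal (C' * (r / r') ^ max 1 (Q + β)) * μ (Metric.ball x r') := by

  set Qb := max 1 (Q + β) with hQbdef
  have hQb1 : (1:ℝ) ≤ Qb := le_max_left _ _
  have hQbQ : Q + β ≤ Qb := le_max_right _ _
  have hC0 : (0:ℝ) ≤ C := le_trans zero_le_one hC
  -- small-radius lemma
  have L1 : ∀ (x : W) (s t : ℝ), 0 < s → s ≤ t → t ≤ dB x →
      μ (Metric.ball x t) ≤ ENNReal.ofReal (C^2 * (t/s)^Qb) * μ (Metric.ball x s) := by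
    intro x s t hs hst htd
    have ht : 0 < t := hs.trans_le hst
    have hts1 : 1 ≤ t / s := (one_le_div hs).mpr hst
    have h1 := (hsmall x t ht htd).2
    have h2 := (hsmall x s hs (hst.trans htd)).1
    have hd0 : 0 ≤ dB x := hdB x
    calc μ (Metric.ball x t)
        ≤ ENNReal.ofReal C * (ENNReal.ofReal (t * dB x ^ (β-1)) * G x) := h1
      _ = ENNReal.ofReal (C * (t/s)) * (ENNReal.ofReal (s * dB x ^ (β-1)) * G x) := by
          rw [← mul_assoc, ← mul_assoc, ← ENNReal.ofReal_mul hC0,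
            ← ENNReal.ofReal_mul (by positivity)]
          congr 2
          field_simp
      _ ≤ ENNReal.ofReal (C * (t/s)) * (ENNReal.ofReal C * μ (Metric.ball x s)) :=
          mul_le_mul_right h2 _
      _ = ENNReal.ofReal (C * (t/s) * C) * μ (Metric.ball x s) := by
          rw [← mul_assoc, ← ENNReal.ofReal_mul (by positivity)]
      _ ≤ ENNReal.ofReal (C^2 * (t/s)^Qb) * μ (Metric.ball x s) := by
          refine mul_le_mul_left (ENNReal.ofReal_le_ofReal ?_) _
          have h3 : t/s ≤ (t/s)^Qb := by
            calc t/s = (t/s)^(1:ℝ) := (Real.rpow_one _).symm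
              _ ≤ (t/s)^Qb := Real.rpow_le_rpow_of_exponent_le hts1 hQb1
          calc C * (t/s) * C = C^2 * (t/s) := by ring
            _ ≤ C^2 * (t/s)^Qb := by
                exact mul_le_mul_of_nonneg_left h3 (by positivity)
  -- large-radius lemma
  have L2 : ∀ (x : W) (s t : ℝ), 0 < s → s ≤ t → dB x ≤ s →
      μ (Metric.ball x t) ≤ ENNReal.ofReal (C^2 * Clow * (t/s)^Qb) * μ (Metric.ball x s) := by
    intro x s t hs hst hds
    have ht : 0 < t := hs.trans_le hst
    have hts1 : 1 ≤ t / s := (one_le_div hs).mpr hst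
    have hts0 : (0:ℝ) < t / s := by positivity
    have h1 := (hbig x t ht (hds.trans hst)).2
    have h2 := (hbig x s hs hds).1
    have hFst := hF x s t hs hst
    have key : C * (t ^ β * (Clow * (t/s)^Q)) = C * Clow * (t/s)^(Q+β) * s^β := by
      have e1 : (t/s)^(Q+β) = (t/s)^Q * (t/s)^β := Real.rpow_add hts0 _ _
      have e2 : t^β = (t/s)^β * s^β := by
        rw [← Real.mul_rpow (by positivity) hs.le, div_mul_cancel₀ _ hs.ne']
      rw [e1, e2]; ring
    calc μ (Metric.ball x t)
        ≤ ENNReal.ofReal C * (ENNReal.ofReal (t^β) * F x t) := h1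
      _ ≤ ENNReal.ofReal C * (ENNReal.ofReal (t^β) *
            (ENNReal.ofReal (Clow * (t/s)^Q) * F x s)) :=
          mul_le_mul_right (mul_le_mul_right hFst _) _
      _ = ENNReal.ofReal (C * (t^β * (Clow * (t/s)^Q))) * F x s := by
          rw [ENNReal.ofReal_mul hC0,
            ENNReal.ofReal_mul (show (0:ℝ) ≤ t^β by positivity), mul_assoc, mul_assoc]
      _ = ENNReal.ofReal (C * Clow * (t/s)^(Q+β)) * (ENNReal.ofReal (s^β) * F x s) := by
          rw [key, ENNReal.ofReal_mul
            (show (0:ℝ) ≤ C * Clow * (t/s)^(Q+β) by positivity), mul_assoc]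
      _ ≤ ENNReal.ofReal (C * Clow * (t/s)^(Q+β)) * (ENNReal.ofReal C * μ (Metric.ball x s)) :=
          mul_le_mul_right h2 _
      _ = ENNReal.ofReal (C * Clow * (t/s)^(Q+β) * C) * μ (Metric.ball x s) := by
          rw [← mul_assoc, ← ENNReal.ofReal_mul (by positivity)]
      _ ≤ ENNReal.ofReal (C^2 * Clow * (t/s)^Qb) * μ (Metric.ball x s) := by
          refine mul_le_mul_left (ENNReal.ofReal_le_ofReal ?_) _
          have h3 : (t/s)^(Q+β) ≤ (t/s)^Qb := Real.rpow_le_rpow_of_exponent_le hts1 hQbQ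
          calc C * Clow * (t/s)^(Q+β) * C = (C^2 * Clow) * (t/s)^(Q+β) := by ring
            _ ≤ (C^2 * Clow) * (t/s)^Qb := by
                refine mul_le_mul_of_nonneg_left h3 (by positivity)
            _ = C^2 * Clow * (t/s)^Qb := by ring
  have hC4 : (1:ℝ) ≤ C^4 := one_le_pow₀ hC
  refine ⟨C^4 * Clow, by nlinarith, ?_⟩
  intro x s t hs hst
  have ht : 0 < t := hs.trans_le hst
  have hts0 : (0:ℝ) ≤ (t/s)^Qb := by positivity
  by_cases h1 : t ≤ dB x
  · refine le_trans (L1 x s t hs hst h1) ?_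
    refine mul_le_mul_left (ENNReal.ofReal_le_ofReal ?_) _
    have h24 : C^2 ≤ C^4 := by nlinarith [sq_nonneg C, sq_nonneg (C-1), sq_nonneg (C+1)]
    have : C^2 ≤ C^4 * Clow :=
      h24.trans (le_mul_of_one_le_right (by positivity) hClow)
    exact mul_le_mul_of_nonneg_right this hts0
  · by_cases h2 : dB x ≤ s
    · refine le_trans (L2 x s t hs hst h2) ?_
      refine mul_le_mul_left (ENNReal.ofReal_le_ofReal ?_) _
      have h24 : C^2 ≤ C^4 := by nlinarith [sq_nonneg C, sq_nonneg (C-1), sq_nonneg (C+1)]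
      have : C^2 * Clow ≤ C^4 * Clow :=
        mul_le_mul_of_nonneg_right h24 (by positivity)
      exact mul_le_mul_of_nonneg_right this hts0
    · push_neg at h1 h2
      have hd : 0 < dB x := hs.trans h2
      have step1 := L2 x (dB x) t hd h1.le le_rfl
      have step2 := L1 x s (dB x) hs h2.le le_rfl
      calc μ (Metric.ball x t)
          ≤ ENNReal.ofReal (C^2 * Clow * (t/dB x)^Qb) * μ (Metric.ball x (dB x)) := step1
        _ ≤ ENNReal.ofReal (C^2 * Clow * (t/dB x)^Qb) *
              (ENNReal.ofReal (C^2 * (dB x/s)^Qb) * μ (Metric.ball x s)) :=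
            mul_le_mul_right step2 _
        _ = ENNReal.ofReal (C^2 * Clow * (t/dB x)^Qb * (C^2 * (dB x/s)^Qb)) *
              μ (Metric.ball x s) := by
            rw [← mul_assoc, ← ENNReal.ofReal_mul (by positivity)]
        _ = ENNReal.ofReal (C^4 * Clow * (t/s)^Qb) * μ (Metric.ball x s) := by
            congr 1
            have e : (t/dB x)^Qb * (dB x/s)^Qb = (t/s)^Qb := by
              rw [← Real.mul_rpow (by positivity) (by positivity)]
              congr 1
              field_simp
            rw [show C^2 * Clow * (t/dB x)^Qb * (C^2 * (dB x/s)^Qb)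
                = (C^4 * Clow) * ((t/dB x)^Qb * (dB x/s)^Qb) by ring, e]
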